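/- The function f(n,m,p,o) = 2^{o(n−m)} · ∏_{i=1}^{m} (2^{n+1} − 2^i)(2^{n−i+1+2p+o} + 1)/(2^m − 2^{i−1}) satisfies the recursion f(n,m,p,o) = A + B where A = 0 if n = m and A = 2^o · f(n−1, m, p+1, o) otherwise, and B = 0 if m = 0 and B = (2^{2p+o+2} + 2) · f(n−1, m−1, p, o+1) otherwise, with base case f(0,0,p,o) = 1. -/

import Mathlib

/-- The counting function for ZX canonical forms. -/
noncomputable def f (n m p o : ℕ) : ℚ :=
  2 ^ (o * (n - m)) *
    ∏ i ∈ Finset.Icc 1 m,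
      ((2 : ℚ) ^ (n + 1) - 2 ^ i) * ((2 : ℚ) ^ (n - i + 1 + 2 * p + o) + 1) /
        ((2 : ℚ) ^ m - 2 ^ (i - 1))

def GP (n m : ℕ) : ℚ := ∏ i ∈ Finset.range m, ((2:ℚ)^n - 2^(1+i))
def DP (m : ℕ) : ℚ := ∏ i ∈ Finset.range m, ((2:ℚ)^m - 2^i)
def QP (x : ℚ) (a len : ℕ) : ℚ := ∏ j ∈ Finset.range len, ((2:ℚ)^(a+j) * x + 1)

lemma GP_succ (n m : ℕ) : GP (n+1) (m+1) = 2^(m+1) * ((2:ℚ)^n - 1) * GP n m := by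
  unfold GP
  have h : ∀ i ∈ Finset.range (m+1), ((2:ℚ)^(n+1) - 2^(1+i)) = 2 * ((2:ℚ)^n - 2^i) := by
    intro i _; rw [pow_succ, pow_add]; ring
  have e : ∏ x ∈ Finset.range m, ((2:ℚ)^n - 2^(x+1)) = ∏ x ∈ Finset.range m, ((2:ℚ)^n - 2^(1+x)) :=
    Finset.prod_congr rfl (fun j _ => by rw [Nat.add_comm])
  rw [Finset.prod_congr rfl h, Finset.prod_mul_distrib, Finset.prod_const,
    Finset.card_range, Finset.prod_range_succ', e]
  simp only [pow_zero]
  ring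

lemma GP_top (n m : ℕ) : GP n (m+1) = GP n m * ((2:ℚ)^n - 2^(1+m)) :=
  Finset.prod_range_succ _ _

lemma DP_succ (m : ℕ) : DP (m+1) = 2^m * ((2:ℚ)^(m+1) - 1) * DP m := by
  unfold DP
  rw [Finset.prod_range_succ']
  have h : ∀ i ∈ Finset.range m, ((2:ℚ)^(m+1) - 2^(i+1)) = 2 * ((2:ℚ)^m - 2^i) := by
    intro i _; rw [pow_succ, pow_succ]; ring
  rw [Finset.prod_congr rfl h, Finset.prod_mul_distrib, Finset.prod_const, Finset.card_range]
  simp only [pow_zero]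
  ring

lemma QP_shift (x : ℚ) (k a len : ℕ) : QP (2^k * x) a len = QP x (a+k) len := by
  unfold QP
  refine Finset.prod_congr rfl (fun j _ => ?_)
  rw [← mul_assoc, ← pow_add]
  congr 3
  omega

lemma QP_left (x : ℚ) (a len : ℕ) : QP x a (len+1) = (2^a * x + 1) * QP x (a+1) len := by
  unfold QP
  rw [Finset.prod_range_succ']
  simp only [add_zero]
  rw [mul_comm]
  congr 1
  refine Finset.prod_congr rfl (fun j _ => ?_)
  rw [show a + (j+1) = (a+1) + j from by omega]

lemma QP_right (x : ℚ) (a len : ℕ) : QP x a (len+1) = QP x a len * (2^(a+len) * x + 1) := by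
  unfold QP; rw [Finset.prod_range_succ]

lemma DP_ne (m : ℕ) : DP m ≠ 0 := by
  unfold DP
  rw [Finset.prod_ne_zero_iff]
  intro i hi
  have hi' : i < m := Finset.mem_range.mp hi
  have : (2:ℚ)^i < 2^m := by gcongr; norm_num
  intro hc
  rw [sub_eq_zero] at hc
  exact absurd hc.symm (ne_of_lt this)

lemma pow_sub_one_ne (k : ℕ) : (2:ℚ)^(k+1) - 1 ≠ 0 := by
  have h1 : (1:ℚ) < 2^(k+1) := by
    apply one_lt_pow₀ one_lt_two (by omega)
  exact ne_of_gt (sub_pos.mpr h1)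

lemma cf (n m p o : ℕ) (h : m ≤ n) :
    f n m p o = 2 ^ (o*(n-m)) * (GP (n+1) m * QP (2^(2*p+o)) (n-m+1) m / DP m) := by
  unfold f
  rw [← Finset.Ico_add_one_right_eq_Icc, Finset.prod_Ico_eq_prod_range]
  rw [show m + 1 - 1 = m from rfl]
  rw [Finset.prod_div_distrib, Finset.prod_mul_distrib]
  have h1 : ∏ i ∈ Finset.range m, ((2:ℚ) ^ (n + 1) - 2 ^ (1+i)) = GP (n+1) m := rfl
  have h2 : ∏ i ∈ Finset.range m, ((2:ℚ) ^ (n - (1+i) + 1 + 2 * p + o) + 1)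
      = QP (2^(2*p+o)) (n-m+1) m := by
    unfold QP
    rw [← Finset.prod_range_reflect]
    refine Finset.prod_congr rfl (fun j hj => ?_)
    rw [← pow_add]
    congr 2
    have hj' : j < m := Finset.mem_range.mp hj
    omega
  have h3 : ∏ i ∈ Finset.range m, ((2:ℚ) ^ m - 2 ^ (1+i-1)) = DP m := by
    unfold DP
    refine Finset.prod_congr rfl (fun j hj => ?_)
    congr 2
    omega
  rw [h1, h2, h3]

lemma key0 (d p o : ℕ) : f (d+1) 0 p o = 2^o * f d 0 (p+1) o := by
  rw [cf _ _ _ _ (Nat.zero_le _), cf _ _ _ _ (Nat.zero_le _)]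
  simp only [GP, DP, QP, Finset.range_zero, Finset.prod_empty, Nat.sub_zero]
  rw [show o*(d+1) = o + o*d from by ring]
  rw [pow_add]
  ring

lemma key2 (k p o : ℕ) : f (k+1) (k+1) p o = ((2:ℚ)^(2*p+o+2) + 2) * f k k p (o+1) := by
  rw [cf _ _ _ _ (le_refl (k+1)), cf _ _ _ _ (le_refl k)]
  rw [show (k+1) - (k+1) = 0 from by omega, show k - k = 0 from by omega]
  rw [show (k+1) + 1 = (k+1)+1 from rfl]
  rw [GP_succ (k+1) k, QP_left, DP_succ]
  rw [show (2:ℚ)^(2*p+(o+1)) = 2^1 * 2^(2*p+o) from by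
    rw [show 2*p+(o+1) = 1+(2*p+o) from by omega, pow_add]]
  rw [QP_shift]
  rw [show (0:ℕ)+1 = 1 from rfl, show (1:ℕ)+1 = 2 from rfl]
  have hD := DP_ne k
  have h1 := pow_sub_one_ne k
  field_simp
  ring

lemma key1 (k d p o : ℕ) :
    f (k+d+2) (k+1) p o = 2^o * f (k+d+1) (k+1) (p+1) o
      + ((2:ℚ)^(2*p+o+2) + 2) * f (k+d+1) k p (o+1) := by
  rw [cf _ _ _ _ (by omega : k+1 ≤ k+d+2), cf _ _ _ _ (by omega : k+1 ≤ k+d+1),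
    cf _ _ _ _ (by omega : k ≤ k+d+1)]
  rw [show (k+d+2) - (k+1) = d+1 from by omega, show (k+d+1) - (k+1) = d from by omega,
    show (k+d+1) - k = d+1 from by omega]
  rw [show (d+1)+1 = d+2 from by omega]
  rw [show (k+d+2)+1 = (k+d+2)+1 from rfl, show (k+d+1)+1 = (k+d+1)+1 from rfl]
  rw [GP_succ (k+d+2) k]
  rw [show (k+d+1)+1 = k+d+2 from by omega]
  rw [show (k+1 : ℕ) = k+1 from rfl, GP_top (k+d+2) k]
  rw [QP_left (2^(2*p+o)) (d+2) k]
  rw [show (2:ℚ)^(2*(p+1)+o) = 2^2 * 2^(2*p+o) from by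
    rw [show 2*(p+1)+o = 2+(2*p+o) from by omega, pow_add]]
  rw [QP_shift]
  rw [show (d+1)+2 = d+3 from by omega, show (d+2)+1 = d+3 from by omega]
  rw [QP_right (2^(2*p+o)) (d+3) k]
  rw [show (2:ℚ)^(2*p+(o+1)) = 2^1 * 2^(2*p+o) from by
    rw [show 2*p+(o+1) = 1+(2*p+o) from by omega, pow_add]]
  rw [QP_shift]
  rw [show (d+2)+1 = d+3 from by omega]
  rw [DP_succ k]
  have hD := DP_ne k
  have h1 := pow_sub_one_ne k
  field_simp
  ring

/-- `f` satisfies the recursion `f(n,m,p,o) = A + B` with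
`A = 0` if `n = m` and `A = 2^o · f(n−1, m, p+1, o)` otherwise, and
`B = 0` if `m = 0` and `B = (2^(2p+o+2) + 2) · f(n−1, m−1, p, o+1)` otherwise,
with base case `f(0,0,p,o) = 1`. -/
theorem f_recursion :
    (∀ p o : ℕ, f 0 0 p o = 1) ∧
    (∀ n m p o : ℕ, m ≤ n → ¬(n = 0 ∧ m = 0) →
      f n m p o =
        (if n = m then 0 else 2 ^ o * f (n - 1) m (p + 1) o) +
        (if m = 0 then 0 else ((2 : ℚ) ^ (2 * p + o + 2) + 2) * f (n - 1) (m - 1) p (o + 1))) := by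
  constructor
  · intro p o
    simp [f]
  · intro n m p o hmn hne
    rcases Nat.eq_zero_or_pos m with hm | hm
    · subst hm
      have hn : n ≠ 0 := fun h => hne ⟨h, rfl⟩
      obtain ⟨d, rfl⟩ : ∃ d, n = d+1 := ⟨n-1, by omega⟩
      rw [if_neg (by omega : ¬ d+1 = 0), if_pos rfl, add_zero]
      rw [show d+1-1 = d from by omega]
      exact key0 d p o
    · obtain ⟨k, rfl⟩ : ∃ k, m = k+1 := ⟨m-1, by omega⟩
      rcases eq_or_lt_of_le hmn with heq | hlt
      · subst heq
        rw [if_pos rfl, if_neg (by omega : ¬ k+1 = 0), zero_add]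
        rw [show k+1-1 = k from by omega]
        exact key2 k p o
      · obtain ⟨d, rfl⟩ : ∃ d, n = k+d+2 := ⟨n-k-2, by omega⟩
        rw [if_neg (by omega : ¬ k+d+2 = k+1), if_neg (by omega : ¬ k+1 = 0)]
        rw [show k+d+2-1 = k+d+1 from by omega, show k+1-1 = k from by omega]
        exact key1 k d p o
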